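/- arXiv:1309.1040 — 2 statements merged into one kernel-verified Lean document; each statement's English description precedes it below -/
import Mathlib

section
/- Let A be an m×n (0,±1)-matrix that is a (u,u'|v,v')-ASM, and let u⁺ = #{j : u_j = +1} and u⁻ = #{j : u_j = −1}. Then for every k with 1 ≤ k ≤ m, the partial sums satisfy −u⁺ ≤ r⁻_k(v,v') − r⁺_k(v,v') ≤ u⁻, where r⁺_k and r⁻_k count indices i ≤ k with v_i = v'_i = +1 and v_i = v'_i = −1 respectively. -/
/-- The nonzero entries of a list of integers alternate in sign. -/
def AltList (l : List ℤ) : Prop :=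
  List.Chain' (fun x y => x * y = -1) (l.filter (· ≠ 0))

/-- A vector of ±1s. -/
def SignVec {p : ℕ} (w : Fin p → ℤ) : Prop := ∀ i, w i = 1 ∨ w i = -1

/-- `A` is a (u,u'|v,v')-ASM: a (0,±1)-matrix such that in the bordered matrix
(u on top, u' on bottom, v on the left, v' on the right, zeros in corners)
the nonzero entries of each interior row and column alternate in sign. -/
def IsGASM {m n : ℕ} (u u' : Fin n → ℤ) (v v' : Fin m → ℤ)
    (A : Matrix (Fin m) (Fin n) ℤ) : Prop :=
  (∀ i j, A i j = 0 ∨ A i j = 1 ∨ A i j = -1) ∧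
  (∀ i : Fin m, AltList (v i :: (List.ofFn fun j => A i j) ++ [v' i])) ∧
  (∀ j : Fin n, AltList (u j :: (List.ofFn fun i => A i j) ++ [u' j]))

/-- Ordinary alternating sign matrix, via the bordered formulation with all borders −1. -/
def IsASM {n : ℕ} (A : Matrix (Fin n) (Fin n) ℤ) : Prop :=
  IsGASM (fun _ => -1) (fun _ => -1) (fun _ => -1) (fun _ => -1) A


private lemma list_sum_filter_ne_zero (l : List ℤ) : (l.filter (· ≠ 0)).sum = l.sum := by
  induction l with
  | nil => simp
  | cons a t ih =>
    rw [List.filter_cons]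
    simp only [ne_eq, decide_not] at ih
    by_cases h : a = 0
    · simp [h, ih]
    · simp [h, ih]

private lemma alt_two_mul_sum : ∀ (f : List ℤ), (∀ x ∈ f, x = 1 ∨ x = -1) →
    List.Chain' (fun x y => x * y = -1) f →
    2 * f.sum = f.headD 0 + f.getLast?.getD 0 := by
  intro f
  induction f with
  | nil => simp
  | cons a t ih =>
    intro h1 h2
    cases t with
    | nil => simp; ring
    | cons b t' =>
      have hab : a * b = -1 := List.isChain_cons_cons.mp h2 |>.1
      have hchain := List.isChain_cons_cons.mp h2 |>.2
      have ihs := ih (fun x hx => h1 x (List.mem_cons_of_mem a hx)) hchain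
      have ha : a = 1 ∨ a = -1 := h1 a (by simp)
      have hb : b = 1 ∨ b = -1 := h1 b (by simp)
      have hba : b = -a := by rcases ha with h | h <;> rcases hb with h' | h' <;>
        simp [h, h'] at hab ⊢
      rw [List.getLast?_cons_cons]
      simp only [List.sum_cons, List.headD_cons] at ihs ⊢
      linarith

private lemma col_sum_bound {m : ℕ} (uj uj' : ℤ) (c : Fin m → ℤ) (huj : uj = 1 ∨ uj = -1)
    (hc : ∀ i, c i = 0 ∨ c i = 1 ∨ c i = -1)
    (halt : AltList (uj :: ((List.ofFn c) ++ [uj']))) (k : ℕ) :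
    (∑ i ∈ Finset.univ.filter (fun i : Fin m => (i : ℕ) < k), c i) = 0 ∨
    (∑ i ∈ Finset.univ.filter (fun i : Fin m => (i : ℕ) < k), c i) = -uj := by
  have huj0 : uj ≠ 0 := by rcases huj with h | h <;> simp [h]
  set p : List ℤ := uj :: (List.ofFn c).take k with hp
  have hpre : p <+: uj :: ((List.ofFn c) ++ [uj']) := by
    obtain ⟨t, ht⟩ := (List.take_prefix k (List.ofFn c))
    refine ⟨t ++ [uj'], ?_⟩
    simp only [hp, List.cons_append, List.cons.injEq, true_and]
    rw [← List.append_assoc, ht]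
  have hchain : List.Chain' (fun x y => x * y = -1) (p.filter (· ≠ 0)) :=
    halt.prefix (List.IsPrefix.filter _ hpre)
  have hmem : ∀ x ∈ p.filter (· ≠ 0), x = 1 ∨ x = -1 := by
    intro x hx
    rw [List.mem_filter] at hx
    obtain ⟨hx1, hx2⟩ := hx
    simp only [decide_eq_true_eq] at hx2
    rcases List.mem_cons.mp hx1 with h | h
    · rcases huj with h' | h' <;> simp [h, h']
    · obtain ⟨i, rfl⟩ := List.mem_ofFn.mp (List.mem_of_mem_take h)
      rcases hc i with h' | h' | h' <;> simp_all
  have key := alt_two_mul_sum _ hmem hchain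
  rw [list_sum_filter_ne_zero] at key
  have hfil : p.filter (· ≠ 0) = uj :: ((List.ofFn c).take k).filter (· ≠ 0) := by
    simp [hp, List.filter_cons, huj0]
  have hhead : (p.filter (· ≠ 0)).headD 0 = uj := by rw [hfil]; rfl
  have hlast : ∃ x, (p.filter (· ≠ 0)).getLast? = some x ∧ (x = 1 ∨ x = -1) := by
    have hne : p.filter (· ≠ 0) ≠ [] := by rw [hfil]; simp
    refine ⟨(p.filter (· ≠ 0)).getLast hne, List.getLast?_eq_getLast_of_ne_nil hne, ?_⟩
    exact hmem _ (List.getLast_mem hne)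
  obtain ⟨x, hx, hx1⟩ := hlast
  rw [hhead, hx] at key
  have hsum : p.sum = uj + ∑ i ∈ Finset.univ.filter (fun i : Fin m => (i : ℕ) < k), c i := by
    simp [hp, List.sum_take_ofFn]
  rw [hsum] at key
  simp only [Option.getD_some] at key
  rcases huj with h | h <;> rcases hx1 with h' | h' <;> subst h <;> omega

private lemma row_sum_eq {n : ℕ} (vi vi' : ℤ) (r : Fin n → ℤ) (hvi : vi = 1 ∨ vi = -1)
    (hvi' : vi' = 1 ∨ vi' = -1)
    (hr : ∀ j, r j = 0 ∨ r j = 1 ∨ r j = -1)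
    (halt : AltList (vi :: ((List.ofFn r) ++ [vi']))) :
    2 * (∑ j, r j) = -(vi + vi') := by
  have hvi0 : vi ≠ 0 := by rcases hvi with h | h <;> simp [h]
  have hvi'0 : vi' ≠ 0 := by rcases hvi' with h | h <;> simp [h]
  set L : List ℤ := vi :: ((List.ofFn r) ++ [vi']) with hL
  have hmem : ∀ x ∈ L.filter (· ≠ 0), x = 1 ∨ x = -1 := by
    intro x hx
    rw [List.mem_filter] at hx
    obtain ⟨hx1, hx2⟩ := hx
    simp only [decide_eq_true_eq] at hx2
    rcases List.mem_cons.mp hx1 with h | h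
    · rcases hvi with h' | h' <;> simp [h, h']
    · rcases List.mem_append.mp h with h | h
      · obtain ⟨i, rfl⟩ := List.mem_ofFn.mp h
        rcases hr i with h' | h' | h' <;> simp_all
      · simp only [List.mem_singleton] at h
        rcases hvi' with h' | h' <;> simp [h, h']
  have key := alt_two_mul_sum _ hmem halt
  rw [list_sum_filter_ne_zero] at key
  have hfil : L.filter (· ≠ 0) = vi :: (((List.ofFn r).filter (· ≠ 0)) ++ [vi']) := by
    simp [hL, List.filter_cons, List.filter_append, hvi0, hvi'0]
  have hhead : (L.filter (· ≠ 0)).headD 0 = vi := by rw [hfil]; rfl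
  have hlast : (L.filter (· ≠ 0)).getLast? = some vi' := by
    rw [hfil, ← List.cons_append, List.getLast?_concat]
  have hsum : L.sum = vi + (∑ j, r j) + vi' := by
    simp [hL, List.sum_ofFn]; ring
  rw [hhead, hlast, hsum] at key
  simp only [Option.getD_some] at key
  linarith

theorem stmt3 {m n : ℕ} (u u' : Fin n → ℤ) (v v' : Fin m → ℤ)
    (hu : SignVec u) (hu' : SignVec u') (hv : SignVec v) (hv' : SignVec v')
    (A : Matrix (Fin m) (Fin n) ℤ) (hA : IsGASM u u' v v' A)
    (k : ℕ) (hk1 : 1 ≤ k) (hk2 : k ≤ m) :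
    -((Finset.univ.filter fun j : Fin n => u j = 1).card : ℤ) ≤
      ((Finset.univ.filter fun i : Fin m => (i : ℕ) < k ∧ v i = -1 ∧ v' i = -1).card : ℤ) -
        ((Finset.univ.filter fun i : Fin m => (i : ℕ) < k ∧ v i = 1 ∧ v' i = 1).card : ℤ) ∧
    ((Finset.univ.filter fun i : Fin m => (i : ℕ) < k ∧ v i = -1 ∧ v' i = -1).card : ℤ) -
        ((Finset.univ.filter fun i : Fin m => (i : ℕ) < k ∧ v i = 1 ∧ v' i = 1).card : ℤ) ≤
      ((Finset.univ.filter fun j : Fin n => u j = -1).card : ℤ) := by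
  obtain ⟨h01, hrow, hcol⟩ := hA
  set F : Finset (Fin m) := Finset.univ.filter (fun i : Fin m => (i : ℕ) < k) with hF
  set T : ℤ := ∑ i ∈ F, ∑ j, A i j with hT
  -- 2T = ∑ -(v i + v' i)
  have hT2 : 2 * T = ∑ i ∈ F, -(v i + v' i) := by
    rw [hT, Finset.mul_sum]
    exact Finset.sum_congr rfl fun i _ =>
      row_sum_eq _ _ _ (hv i) (hv' i) (fun j => h01 i j) (hrow i)
  -- identify the counting expression
  set N : ℤ := ((Finset.univ.filter fun i : Fin m => (i : ℕ) < k ∧ v i = -1 ∧ v' i = -1).card : ℤ)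
    with hN
  set P : ℤ := ((Finset.univ.filter fun i : Fin m => (i : ℕ) < k ∧ v i = 1 ∧ v' i = 1).card : ℤ)
    with hP
  have hTNP : T = N - P := by
    have hstep : ∑ i ∈ F, -(v i + v' i) =
        ∑ i ∈ F, ((if v i = -1 ∧ v' i = -1 then (2 : ℤ) else 0)
          - (if v i = 1 ∧ v' i = 1 then (2 : ℤ) else 0)) := by
      refine Finset.sum_congr rfl fun i _ => ?_
      rcases hv i with h1 | h1 <;> rcases hv' i with h2 | h2 <;> simp [h1, h2]
    have hN' : (Finset.univ.filter fun i : Fin m => (i : ℕ) < k ∧ v i = -1 ∧ v' i = -1)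
        = F.filter (fun i => v i = -1 ∧ v' i = -1) := by
      rw [hF, Finset.filter_filter]
    have hP' : (Finset.univ.filter fun i : Fin m => (i : ℕ) < k ∧ v i = 1 ∧ v' i = 1)
        = F.filter (fun i => v i = 1 ∧ v' i = 1) := by
      rw [hF, Finset.filter_filter]
    have hsum1 : ∑ i ∈ F, (if v i = -1 ∧ v' i = -1 then (2 : ℤ) else 0) = 2 * N := by
      rw [← Finset.sum_filter, Finset.sum_const, hN, hN', nsmul_eq_mul]; ring
    have hsum2 : ∑ i ∈ F, (if v i = 1 ∧ v' i = 1 then (2 : ℤ) else 0) = 2 * P := by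
      rw [← Finset.sum_filter, Finset.sum_const, hP, hP', nsmul_eq_mul]; ring
    have : 2 * T = 2 * N - 2 * P := by
      rw [hT2, hstep, Finset.sum_sub_distrib, hsum1, hsum2]
    linarith
  -- column bounds
  have hswap : T = ∑ j, ∑ i ∈ F, A i j := by rw [hT]; exact Finset.sum_comm
  have hcb : ∀ j, (∑ i ∈ F, A i j) = 0 ∨ (∑ i ∈ F, A i j) = -(u j) := fun j =>
    col_sum_bound (u j) (u' j) (fun i => A i j) (hu j) (fun i => h01 i j) (hcol j) k
  have hlow : ∑ j, (if u j = 1 then (-1 : ℤ) else 0) ≤ T := by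
    rw [hswap]
    refine Finset.sum_le_sum fun j _ => ?_
    rcases hu j with h | h <;> rcases hcb j with h' | h' <;> simp [h, h'] <;> omega
  have hhigh : T ≤ ∑ j, (if u j = -1 then (1 : ℤ) else 0) := by
    rw [hswap]
    refine Finset.sum_le_sum fun j _ => ?_
    rcases hu j with h | h <;> rcases hcb j with h' | h' <;> simp [h, h'] <;> omega
  have he1 : ∑ j, (if u j = 1 then (-1 : ℤ) else 0)
      = -((Finset.univ.filter fun j : Fin n => u j = 1).card : ℤ) := by
    rw [← Finset.sum_filter, Finset.sum_const, nsmul_eq_mul]; ring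
  have he2 : ∑ j, (if u j = -1 then (1 : ℤ) else 0)
      = ((Finset.univ.filter fun j : Fin n => u j = -1).card : ℤ) := by
    rw [← Finset.sum_filter, Finset.sum_const, nsmul_eq_mul]; ring
  rw [he1] at hlow
  rw [he2] at hhigh
  exact ⟨by rw [← hTNP]; exact hlow, by rw [← hTNP]; exact hhigh⟩
end

section
/- With f(n) the number of n×n ordinary ASMs and f(u,u'|v,v') the number of (u,u'|v,v')-ASMs, for all 0 ≤ k ≤ n one has f(α_{n,k},α_{n,k}|α_{n,k},α_{n,k}) = f(k)·f(n−k) ≤ f(n), where α_{n,k} consists of k +1s followed by n−k −1s. -/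
/-- The vector with k entries +1 followed by n−k entries −1. -/
def alphaVec (n k : ℕ) : Fin n → ℤ := fun j => if (j : ℕ) < k then 1 else -1

/-- The number of n×n ordinary alternating sign matrices. -/
noncomputable def numASM (n : ℕ) : ℕ :=
  Set.ncard {A : Matrix (Fin n) (Fin n) ℤ | IsASM A}

open Matrix

/-! ### partial sums -/

/-- Partial row sum: sum of the first `m` entries of row `i`. -/
def RS {n : ℕ} (A : Matrix (Fin n) (Fin n) ℤ) (i : Fin n) (m : ℕ) : ℤ :=
  ∑ j ∈ Finset.range m, if h : j < n then A i ⟨j, h⟩ else 0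

lemma RS_succ {n : ℕ} (A : Matrix (Fin n) (Fin n) ℤ) (i : Fin n) (m : ℕ) :
    RS A i (m + 1) = RS A i m + (if h : m < n then A i ⟨m, h⟩ else 0) :=
  Finset.sum_range_succ _ _

lemma range_dite_eq_filter {n : ℕ} (f : Fin n → ℤ) (m : ℕ) :
    (∑ j ∈ Finset.range m, if h : j < n then f ⟨j, h⟩ else 0) =
      ∑ j ∈ Finset.univ.filter (fun j : Fin n => (j : ℕ) < m), f j := by
  induction m with
  | zero =>
    simp [show Finset.univ.filter (fun j : Fin n => (j : ℕ) < 0) = ∅ by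
      ext x; simp]
  | succ m ih =>
    rw [Finset.sum_range_succ, ih]
    by_cases hm : m < n
    · have hset : Finset.univ.filter (fun j : Fin n => (j : ℕ) < m + 1) =
          insert ⟨m, hm⟩ (Finset.univ.filter (fun j : Fin n => (j : ℕ) < m)) := by
        ext x; simp [Fin.ext_iff]; omega
      rw [hset, Finset.sum_insert (by simp)]
      simp [hm]; ring
    · have hset : Finset.univ.filter (fun j : Fin n => (j : ℕ) < m + 1) =
          Finset.univ.filter (fun j : Fin n => (j : ℕ) < m) := by
        ext x; simp; omega
      rw [hset]
      simp [hm]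

lemma RS_eq_filter {n : ℕ} (A : Matrix (Fin n) (Fin n) ℤ) (i : Fin n) (m : ℕ) :
    RS A i m = ∑ j ∈ Finset.univ.filter (fun j : Fin n => (j : ℕ) < m), A i j :=
  range_dite_eq_filter _ _

lemma RS_total {n : ℕ} (A : Matrix (Fin n) (Fin n) ℤ) (i : Fin n) :
    RS A i n = ∑ j, A i j := by
  rw [RS_eq_filter]
  congr 1
  ext x; simp [x.isLt]

lemma RS_of_ge {n : ℕ} (A : Matrix (Fin n) (Fin n) ℤ) (i : Fin n) {m : ℕ} (hm : n ≤ m) :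
    RS A i m = RS A i n := by
  rw [RS_eq_filter, RS_eq_filter]
  congr 1
  ext x; simp [x.isLt]; omega

lemma take_ofFn_sum {n : ℕ} (f : Fin n → ℤ) (m : ℕ) :
    ((List.ofFn f).take m).sum =
      ∑ j ∈ Finset.range m, if h : j < n then f ⟨j, h⟩ else 0 := by
  rw [List.sum_take_ofFn, range_dite_eq_filter]

/-! ### list-level characterization -/

lemma chain_iff_sums (l : List ℤ) : ∀ s : ℤ, (s = 1 ∨ s = -1) →
    (∀ x ∈ l, x = 0 ∨ x = 1 ∨ x = -1) →
    (List.Chain' (fun x y => x * y = -1) (s :: l.filter (· ≠ 0)) ↔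
      ∀ m, (l.take m).sum = 0 ∨ (l.take m).sum = -s) := by
  induction l with
  | nil => intro s hs _; simp [List.Chain']
  | cons x t ih =>
    intro s hs hmem
    have hmem' : ∀ y ∈ t, y = 0 ∨ y = 1 ∨ y = -1 :=
      fun y hy => hmem y (List.mem_cons_of_mem _ hy)
    by_cases hx : x = 0
    · subst hx
      rw [show (0 :: t).filter (· ≠ 0) = t.filter (· ≠ 0) by simp]
      rw [ih s hs hmem']
      constructor
      · intro h m
        match m with
        | 0 => left; simp
        | m + 1 => simpa using h m
      · intro h m
        simpa using h (m + 1)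
    · have hx1 : x = 1 ∨ x = -1 := (hmem x List.mem_cons_self).resolve_left hx
      rw [show (x :: t).filter (· ≠ 0) = x :: t.filter (· ≠ 0) by
        simp [List.filter_cons, hx]]
      rw [show ∀ a b (l : List ℤ), List.Chain' (fun x y => x * y = -1) (a :: b :: l) ↔
        ((a * b = -1) ∧ List.Chain' (fun x y => x * y = -1) (b :: l)) from
        fun _ _ _ => List.isChain_cons_cons]
      rw [ih x hx1 hmem']
      constructor
      · rintro ⟨h1, h2⟩ m
        have hxs : x = -s := by rcases hs with rfl|rfl <;> rcases hx1 with rfl|rfl <;> omega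
        match m with
        | 0 => left; simp
        | m + 1 =>
          simp only [List.take_succ_cons, List.sum_cons]
          rcases h2 m with h|h <;> [right; left] <;> omega
      · intro h
        have h1 : x = -s := by
          have := h 1
          simp at this
          rcases this with h|h
          · exact absurd h hx
          · omega
        constructor
        · rcases hs with rfl|rfl <;> omega
        · intro m
          have := h (m + 1)
          simp only [List.take_succ_cons, List.sum_cons] at this
          rcases this with hh|hh <;> [skip; skip] <;> omega

lemma altList_border_iff (s : ℤ) (hs : s = 1 ∨ s = -1) (l : List ℤ)
    (hl : ∀ x ∈ l, x = 0 ∨ x = 1 ∨ x = -1) :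
    AltList (s :: l ++ [s]) ↔
      (∀ m, (l.take m).sum = 0 ∨ (l.take m).sum = -s) ∧ l.sum = -s := by
  have hs0 : s ≠ 0 := by rcases hs with rfl|rfl <;> omega
  have hmem : ∀ x ∈ l ++ [s], x = 0 ∨ x = 1 ∨ x = -1 := by
    intro x hx
    rcases List.mem_append.1 hx with h|h
    · exact hl x h
    · simp at h; subst h; tauto
  have key : AltList (s :: l ++ [s]) ↔
      ∀ m, ((l ++ [s]).take m).sum = 0 ∨ ((l ++ [s]).take m).sum = -s := by
    unfold AltList
    rw [show ((s :: l ++ [s]).filter (· ≠ 0)) = s :: (l ++ [s]).filter (· ≠ 0) by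
      simp [List.filter_cons, hs0]]
    exact chain_iff_sums (l ++ [s]) s hs hmem
  rw [key]
  have htake : ∀ m, m ≤ l.length → (l ++ [s]).take m = l.take m := by
    intro m hm
    rw [List.take_append]
    simp [Nat.sub_eq_zero_of_le hm]
  constructor
  · intro h
    have h1 := h l.length
    rw [htake l.length le_rfl, List.take_length] at h1
    have h2 := h (l.length + 1)
    rw [List.take_append, List.take_of_length_le (by omega),
      Nat.add_sub_cancel_left] at h2
    simp only [List.take_succ_cons, List.take_zero, List.sum_append, List.sum_cons,
      List.sum_nil, add_zero] at h2
    have hsum : l.sum = -s := by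
      rcases h1 with h1|h1
      · rcases h2 with h2|h2 <;> rcases hs with rfl|rfl <;> omega
      · exact h1
    refine ⟨fun m => ?_, hsum⟩
    by_cases hm : m ≤ l.length
    · have := h m; rwa [htake m hm] at this
    · rw [List.take_of_length_le (by omega)]
      right; exact hsum
  · rintro ⟨h, hsum⟩ m
    by_cases hm : m ≤ l.length
    · rw [htake m hm]; exact h m
    · rw [List.take_of_length_le (by simp; omega)]
      simp [hsum]

/-- Row-level characterization. -/
lemma altRow_iff {n : ℕ} (s : ℤ) (hs : s = 1 ∨ s = -1) (f : Fin n → ℤ)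
    (hf : ∀ j, f j = 0 ∨ f j = 1 ∨ f j = -1) :
    AltList (s :: (List.ofFn f) ++ [s]) ↔
      (∀ m, (∑ j ∈ Finset.range m, if h : j < n then f ⟨j, h⟩ else 0) = 0 ∨
        (∑ j ∈ Finset.range m, if h : j < n then f ⟨j, h⟩ else 0) = -s) ∧
      (∑ j, f j) = -s := by
  have hmem : ∀ x ∈ List.ofFn f, x = 0 ∨ x = 1 ∨ x = -1 := by
    intro x hx
    obtain ⟨j, rfl⟩ := List.mem_ofFn.1 hx
    exact hf j
  rw [altList_border_iff s hs _ hmem]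
  constructor
  · rintro ⟨h, hsum⟩
    refine ⟨fun m => ?_, ?_⟩
    · have := h m; rwa [take_ofFn_sum] at this
    · rw [← List.sum_ofFn]; exact hsum
  · rintro ⟨h, hsum⟩
    refine ⟨fun m => ?_, ?_⟩
    · rw [take_ofFn_sum]; exact h m
    · rw [List.sum_ofFn]; exact hsum

/-! ### matrix-level characterization -/

lemma isGASM_iff {n : ℕ} (u v : Fin n → ℤ) (hu : SignVec u) (hv : SignVec v)
    (A : Matrix (Fin n) (Fin n) ℤ) :
    IsGASM u u v v A ↔
      (∀ i j, A i j = 0 ∨ A i j = 1 ∨ A i j = -1) ∧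
      (∀ i m, RS A i m = 0 ∨ RS A i m = -(v i)) ∧ (∀ i, RS A i n = -(v i)) ∧
      (∀ j m, RS Aᵀ j m = 0 ∨ RS Aᵀ j m = -(u j)) ∧ (∀ j, RS Aᵀ j n = -(u j)) := by
  unfold IsGASM
  constructor
  · rintro ⟨h0, hr, hc⟩
    refine ⟨h0, ?_, ?_, ?_, ?_⟩
    · intro i m
      have := (altRow_iff (v i) (hv i) (fun j => A i j) (fun j => h0 i j)).1 (hr i)
      exact this.1 m
    · intro i
      have := (altRow_iff (v i) (hv i) (fun j => A i j) (fun j => h0 i j)).1 (hr i)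
      rw [RS_total]; exact this.2
    · intro j m
      have := (altRow_iff (u j) (hu j) (fun i => A i j) (fun i => h0 i j)).1 (hc j)
      exact this.1 m
    · intro j
      have := (altRow_iff (u j) (hu j) (fun i => A i j) (fun i => h0 i j)).1 (hc j)
      rw [RS_total]; exact this.2
  · rintro ⟨h0, hr, hrt, hc, hct⟩
    refine ⟨h0, ?_, ?_⟩
    · intro i
      refine (altRow_iff (v i) (hv i) (fun j => A i j) (fun j => h0 i j)).2 ⟨hr i, ?_⟩
      have h := hrt i; rw [RS_total] at h; exact h
    · intro j
      refine (altRow_iff (u j) (hu j) (fun i => A i j) (fun i => h0 i j)).2 ⟨hc j, ?_⟩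
      have h := hct j; rw [RS_total] at h; exact h

lemma signVec_alpha (n k : ℕ) : SignVec (alphaVec n k) := by
  intro i; unfold alphaVec; split <;> simp

lemma signVec_negOne (n : ℕ) : SignVec (fun _ : Fin n => (-1 : ℤ)) := fun _ => Or.inr rfl

lemma isASM_iff {n : ℕ} (A : Matrix (Fin n) (Fin n) ℤ) :
    IsASM A ↔
      (∀ i j, A i j = 0 ∨ A i j = 1 ∨ A i j = -1) ∧
      (∀ i m, RS A i m = 0 ∨ RS A i m = 1) ∧ (∀ i, RS A i n = 1) ∧
      (∀ j m, RS Aᵀ j m = 0 ∨ RS Aᵀ j m = 1) ∧ (∀ j, RS Aᵀ j n = 1) := by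
  unfold IsASM
  rw [isGASM_iff _ _ (signVec_negOne n) (signVec_negOne n)]
  norm_num

/-! ### the corner argument -/

lemma corner {n k : ℕ} (A : Matrix (Fin n) (Fin n) ℤ)
    (hr : ∀ i : Fin n, (i : ℕ) < k → ∀ m, RS A i m = 0 ∨ RS A i m = -1)
    (hrt : ∀ i : Fin n, (i : ℕ) < k → RS A i n = -1)
    (hc : ∀ j : Fin n, k ≤ (j : ℕ) → ∀ m, RS Aᵀ j m = 0 ∨ RS Aᵀ j m = 1) :
    ∀ i j : Fin n, (i : ℕ) < k → k ≤ (j : ℕ) → A i j = 0 := by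
  have key : ∀ m, k ≤ m → ∀ i : Fin n, (i : ℕ) < k → RS A i n - RS A i m = 0 := by
    intro m hm
    have swap : ∑ i ∈ Finset.univ.filter (fun i : Fin n => (i : ℕ) < k),
        (RS A i n - RS A i m) =
        ∑ j ∈ Finset.univ.filter (fun j : Fin n => ¬ (j : ℕ) < m), RS Aᵀ j k := by
      have e1 : ∀ i : Fin n, RS A i n - RS A i m =
          ∑ j ∈ Finset.univ.filter (fun j : Fin n => ¬ (j : ℕ) < m), A i j := by
        intro i
        have := Finset.sum_filter_add_sum_filter_not Finset.univ
          (fun j : Fin n => (j : ℕ) < m) (A i)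
        rw [RS_total, RS_eq_filter]
        omega
      rw [Finset.sum_congr rfl (fun i _ => e1 i)]; refine Finset.sum_comm.trans ?_
      refine Finset.sum_congr rfl (fun j _ => ?_)
      rw [RS_eq_filter]
      rfl
    have hle : ∀ i ∈ Finset.univ.filter (fun i : Fin n => (i : ℕ) < k),
        RS A i n - RS A i m ≤ 0 := by
      intro i hi
      simp only [Finset.mem_filter] at hi
      have h1 := hrt i hi.2
      rcases hr i hi.2 m with h|h <;> omega
    have hge : (0 : ℤ) ≤ ∑ j ∈ Finset.univ.filter (fun j : Fin n => ¬ (j : ℕ) < m),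
        RS Aᵀ j k := by
      refine Finset.sum_nonneg (fun j hj => ?_)
      simp only [Finset.mem_filter] at hj
      rcases hc j (by omega) k with h|h <;> omega
    have hzero : ∑ i ∈ Finset.univ.filter (fun i : Fin n => (i : ℕ) < k),
        (RS A i n - RS A i m) = 0 :=
      le_antisymm (Finset.sum_nonpos hle) (swap ▸ hge)
    intro i hi
    exact (Finset.sum_eq_zero_iff_of_nonpos hle).1 hzero i (by simp [hi])
  intro i j hi hj
  have h1 := key (j : ℕ) hj i hi
  have h2 := key ((j : ℕ) + 1) (by omega) i hi
  have h3 := RS_succ A i (j : ℕ)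
  rw [dif_pos j.isLt] at h3
  simp only [Fin.eta] at h3
  omega

/-! ### blocks -/

def blockM {n k : ℕ} (hk : k ≤ n) (B₁ : Matrix (Fin k) (Fin k) ℤ)
    (B₂ : Matrix (Fin (n - k)) (Fin (n - k)) ℤ) : Matrix (Fin n) (Fin n) ℤ :=
  fun i j =>
    if hi : (i : ℕ) < k then
      if hj : (j : ℕ) < k then B₁ ⟨i, hi⟩ ⟨j, hj⟩ else 0
    else
      if (j : ℕ) < k then 0
      else B₂ ⟨(i : ℕ) - k, by have := i.isLt; omega⟩ ⟨(j : ℕ) - k, by have := j.isLt; omega⟩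

def topB {n k : ℕ} (hk : k ≤ n) (A : Matrix (Fin n) (Fin n) ℤ) :
    Matrix (Fin k) (Fin k) ℤ :=
  fun i j => A (Fin.castLE hk i) (Fin.castLE hk j)

def botB {n k : ℕ} (hk : k ≤ n) (A : Matrix (Fin n) (Fin n) ℤ) :
    Matrix (Fin (n - k)) (Fin (n - k)) ℤ :=
  fun i j => A ⟨k + i, by have := i.isLt; omega⟩ ⟨k + j, by have := j.isLt; omega⟩

lemma blockM_transpose {n k : ℕ} (hk : k ≤ n) (B₁ : Matrix (Fin k) (Fin k) ℤ)
    (B₂ : Matrix (Fin (n - k)) (Fin (n - k)) ℤ) :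
    (blockM hk B₁ B₂)ᵀ = blockM hk B₁ᵀ B₂ᵀ := by
  ext i j
  simp only [Matrix.transpose_apply, blockM]
  by_cases hi : (i : ℕ) < k <;> by_cases hj : (j : ℕ) < k <;> simp [hi, hj]

lemma topB_transpose {n k : ℕ} (hk : k ≤ n) (A : Matrix (Fin n) (Fin n) ℤ) :
    topB hk Aᵀ = (topB hk A)ᵀ := rfl

lemma botB_transpose {n k : ℕ} (hk : k ≤ n) (A : Matrix (Fin n) (Fin n) ℤ) :
    botB hk Aᵀ = (botB hk A)ᵀ := rfl

lemma RS_neg {n : ℕ} (A : Matrix (Fin n) (Fin n) ℤ) (i : Fin n) (m : ℕ) :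
    RS (-A) i m = -RS A i m := by
  unfold RS
  rw [← Finset.sum_neg_distrib]
  refine Finset.sum_congr rfl (fun j _ => ?_)
  by_cases h : j < n <;> simp [h]

lemma RS_blockM_top {n k : ℕ} (hk : k ≤ n) (B₁ : Matrix (Fin k) (Fin k) ℤ)
    (B₂ : Matrix (Fin (n - k)) (Fin (n - k)) ℤ) (i : Fin k) (m : ℕ) :
    RS (blockM hk B₁ B₂) (Fin.castLE hk i) m = RS B₁ i (min m k) := by
  induction m with
  | zero => simp [RS]
  | succ m ih =>
    rw [RS_succ, ih]
    by_cases hm : m < k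
    · rw [show min (m + 1) k = (min m k) + 1 by omega, RS_succ]
      rw [dif_pos (by omega : m < n), dif_pos (show min m k < k by omega)]
      congr 1
      show blockM hk B₁ B₂ _ _ = _
      rw [blockM]
      rw [dif_pos (show ((Fin.castLE hk i : Fin n) : ℕ) < k from i.isLt)]
      rw [dif_pos (by exact hm)]
      congr 1 <;> apply Fin.ext <;> simp <;> omega
    · rw [show min (m + 1) k = min m k by omega]
      by_cases hmn : m < n
      · rw [dif_pos hmn]
        have : blockM hk B₁ B₂ (Fin.castLE hk i) ⟨m, hmn⟩ = 0 := by
          rw [blockM, dif_pos (show ((Fin.castLE hk i : Fin n) : ℕ) < k from i.isLt),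
            dif_neg hm]
        rw [this, add_zero]
      · rw [dif_neg hmn, add_zero]

lemma RS_blockM_bot {n k : ℕ} (hk : k ≤ n) (B₁ : Matrix (Fin k) (Fin k) ℤ)
    (B₂ : Matrix (Fin (n - k)) (Fin (n - k)) ℤ) (i : Fin (n - k)) (m : ℕ) :
    RS (blockM hk B₁ B₂) ⟨k + i, by have := i.isLt; omega⟩ m = RS B₂ i (m - k) := by
  induction m with
  | zero => simp [RS]
  | succ m ih =>
    rw [RS_succ, ih]
    by_cases hm : m < k
    · rw [show m + 1 - k = m - k by omega]
      by_cases hmn : m < n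
      · rw [dif_pos hmn]
        have : blockM hk B₁ B₂ ⟨k + i, by have := i.isLt; omega⟩ ⟨m, hmn⟩ = 0 := by
          rw [blockM, dif_neg (by simp)]
          simp [hm]
        rw [this, add_zero]
      · rw [dif_neg hmn, add_zero]
    · by_cases hmn : m < n
      · rw [show m + 1 - k = (m - k) + 1 by omega, RS_succ]
        rw [dif_pos hmn, dif_pos (show m - k < n - k by omega)]
        have e : blockM hk B₁ B₂ ⟨k + ↑i, by have := i.isLt; omega⟩ ⟨m, hmn⟩
            = B₂ ⟨k + ↑i - k, by have := i.isLt; omega⟩ ⟨m - k, by omega⟩ := by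
          rw [blockM, dif_neg (by simp), if_neg hm]
        rw [e]
        have e2 : (⟨k + ↑i - k, by have := i.isLt; omega⟩ : Fin (n - k)) = i :=
          Fin.ext (by simp)
        rw [e2]
      · rw [show m + 1 - k = (m - k) + 1 by omega, RS_succ,
          dif_neg (show ¬ m - k < n - k by omega), dif_neg hmn, add_zero]


lemma RS_topB {n k : ℕ} (hk : k ≤ n) (A : Matrix (Fin n) (Fin n) ℤ) (i : Fin k)
    (m : ℕ) (hm : m ≤ k) :
    RS (topB hk A) i m = RS A (Fin.castLE hk i) m := by
  induction m with
  | zero => simp [RS]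
  | succ m ih =>
    rw [RS_succ, RS_succ, ih (by omega)]
    rw [dif_pos (show m < k by omega), dif_pos (show m < n by omega)]
    rfl

lemma RS_botB {n k : ℕ} (hk : k ≤ n) (A : Matrix (Fin n) (Fin n) ℤ) (i : Fin (n - k))
    (m : ℕ) :
    RS (botB hk A) i m =
      RS A ⟨k + i, by have := i.isLt; omega⟩ (k + m) -
      RS A ⟨k + i, by have := i.isLt; omega⟩ k := by
  induction m with
  | zero => simp [RS]
  | succ m ih =>
    rw [RS_succ, ih]
    by_cases hm : m < n - k
    · rw [show k + (m + 1) = (k + m) + 1 by omega, RS_succ]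
      rw [dif_pos hm, dif_pos (show k + m < n by omega)]
      have : botB hk A i ⟨m, hm⟩ = A ⟨k + i, by have := i.isLt; omega⟩
          ⟨k + m, by omega⟩ := rfl
      rw [this]
      ring
    · rw [dif_neg hm, add_zero]
      have h1 : RS A ⟨k + i, by have := i.isLt; omega⟩ (k + (m + 1)) =
          RS A ⟨k + i, by have := i.isLt; omega⟩ n := RS_of_ge _ _ (by omega)
      have h2 : RS A ⟨k + i, by have := i.isLt; omega⟩ (k + m) =
          RS A ⟨k + i, by have := i.isLt; omega⟩ n := RS_of_ge _ _ (by omega)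
      rw [h1, h2]

lemma RS_prefix_zero {n k : ℕ} (A : Matrix (Fin n) (Fin n) ℤ) (r : Fin n)
    (h : ∀ j : Fin n, (j : ℕ) < k → A r j = 0) (m : ℕ) (hm : m ≤ k) :
    RS A r m = 0 := by
  induction m with
  | zero => simp [RS]
  | succ m ih =>
    rw [RS_succ, ih (by omega)]
    by_cases hmn : m < n
    · rw [dif_pos hmn, h ⟨m, hmn⟩ (by simpa using by omega : ((⟨m, hmn⟩ : Fin n) : ℕ) < k)]
      simp
    · rw [dif_neg hmn]; simp

lemma RS_tail_const {n k : ℕ} (A : Matrix (Fin n) (Fin n) ℤ) (r : Fin n)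
    (h : ∀ j : Fin n, k ≤ (j : ℕ) → A r j = 0) (m : ℕ) (hm : k ≤ m) :
    RS A r m = RS A r k := by
  induction m with
  | zero => have hk0 : k = 0 := by omega
            rw [hk0]
  | succ m ih =>
    rcases Nat.lt_or_ge k (m + 1) with hlt | hge
    · rw [RS_succ, ih (by omega)]
      by_cases hmn : m < n
      · rw [dif_pos hmn, h ⟨m, hmn⟩ (by simp; omega)]; simp
      · rw [dif_neg hmn]; simp
    · have : k = m + 1 := by omega
      rw [this]

/-! ### structure of alpha-GASMs -/

lemma alpha_neg_lt {n k : ℕ} {i : Fin n} (hi : (i : ℕ) < k) :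
    -(alphaVec n k i) = -1 := by simp [alphaVec, hi]

lemma alpha_neg_ge {n k : ℕ} {i : Fin n} (hi : k ≤ (i : ℕ)) :
    -(alphaVec n k i) = 1 := by simp [alphaVec, Nat.not_lt.2 hi]

lemma G_offdiag {n k : ℕ} (hk : k ≤ n) (A : Matrix (Fin n) (Fin n) ℤ)
    (hA : IsGASM (alphaVec n k) (alphaVec n k) (alphaVec n k) (alphaVec n k) A) :
    (∀ i j : Fin n, (i : ℕ) < k → k ≤ (j : ℕ) → A i j = 0) ∧
    (∀ i j : Fin n, k ≤ (i : ℕ) → (j : ℕ) < k → A i j = 0) := by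
  rw [isGASM_iff _ _ (signVec_alpha n k) (signVec_alpha n k)] at hA
  obtain ⟨h0, hr, hrt, hc, hct⟩ := hA
  constructor
  · apply corner A
    · intro i hi m; have := hr i m; rwa [alpha_neg_lt hi] at this
    · intro i hi; have := hrt i; rwa [alpha_neg_lt hi] at this
    · intro j hj m; have := hc j m; rwa [alpha_neg_ge hj] at this
  · intro i j hi hj
    have key : ∀ p q : Fin n, (p : ℕ) < k → k ≤ (q : ℕ) → Aᵀ p q = 0 := by
      apply corner Aᵀ
      · intro p hp m; have := hc p m; rwa [alpha_neg_lt hp] at this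
      · intro p hp; have := hct p; rwa [alpha_neg_lt hp] at this
      · intro q hq m
        rw [Matrix.transpose_transpose]
        have := hr q m; rwa [alpha_neg_ge hq] at this
    exact key j i hj hi

lemma top_rows_aux {n k : ℕ} (hk : k ≤ n) (A : Matrix (Fin n) (Fin n) ℤ)
    (hr : ∀ i : Fin n, (i : ℕ) < k → ∀ m, RS A i m = 0 ∨ RS A i m = -1)
    (hrt : ∀ i : Fin n, (i : ℕ) < k → RS A i n = -1)
    (hz : ∀ i j : Fin n, (i : ℕ) < k → k ≤ (j : ℕ) → A i j = 0) :
    (∀ (i : Fin k) m, RS (-(topB hk A)) i m = 0 ∨ RS (-(topB hk A)) i m = 1) ∧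
    (∀ i : Fin k, RS (-(topB hk A)) i k = 1) := by
  have hik : ∀ i : Fin k, ((Fin.castLE hk i : Fin n) : ℕ) < k := fun i => i.isLt
  have htot : ∀ i : Fin k, RS (-(topB hk A)) i k = 1 := by
    intro i
    rw [RS_neg, RS_topB hk A i k le_rfl]
    have h1 : RS A (Fin.castLE hk i) n = RS A (Fin.castLE hk i) k :=
      RS_tail_const A _ (fun j hj => hz _ j (hik i) hj) n hk
    have h2 := hrt (Fin.castLE hk i) (hik i)
    omega
  refine ⟨fun i m => ?_, htot⟩
  rcases le_or_gt m k with hm | hm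
  · rw [RS_neg, RS_topB hk A i m hm]
    rcases hr (Fin.castLE hk i) (hik i) m with h|h <;> omega
  · rw [RS_of_ge _ _ (le_of_lt hm)]
    right; exact htot i

lemma bot_rows_aux {n k : ℕ} (hk : k ≤ n) (A : Matrix (Fin n) (Fin n) ℤ)
    (hr : ∀ i : Fin n, k ≤ (i : ℕ) → ∀ m, RS A i m = 0 ∨ RS A i m = 1)
    (hrt : ∀ i : Fin n, k ≤ (i : ℕ) → RS A i n = 1)
    (hz : ∀ i j : Fin n, k ≤ (i : ℕ) → (j : ℕ) < k → A i j = 0) :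
    (∀ (i : Fin (n - k)) m, RS (botB hk A) i m = 0 ∨ RS (botB hk A) i m = 1) ∧
    (∀ i : Fin (n - k), RS (botB hk A) i (n - k) = 1) := by
  have hr' : ∀ i : Fin (n - k), k ≤ ((⟨k + i, by have := i.isLt; omega⟩ : Fin n) : ℕ) :=
    fun i => by simp
  have hpre : ∀ i : Fin (n - k),
      RS A ⟨k + i, by have := i.isLt; omega⟩ k = 0 := by
    intro i
    exact RS_prefix_zero A _ (fun j hj => hz _ j (hr' i) hj) k le_rfl
  have key : ∀ (i : Fin (n - k)) m, RS (botB hk A) i m =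
      RS A ⟨k + i, by have := i.isLt; omega⟩ (k + m) := by
    intro i m
    rw [RS_botB, hpre i, sub_zero]
  constructor
  · intro i m
    rw [key]
    exact hr _ (hr' i) _
  · intro i
    rw [key, show k + (n - k) = n by omega]
    exact hrt _ (hr' i)

lemma topASM {n k : ℕ} (hk : k ≤ n) (A : Matrix (Fin n) (Fin n) ℤ)
    (hA : IsGASM (alphaVec n k) (alphaVec n k) (alphaVec n k) (alphaVec n k) A) :
    IsASM (-(topB hk A)) := by
  obtain ⟨hz1, hz2⟩ := G_offdiag hk A hA
  rw [isGASM_iff _ _ (signVec_alpha n k) (signVec_alpha n k)] at hA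
  obtain ⟨h0, hr, hrt, hc, hct⟩ := hA
  have hrowaux := top_rows_aux hk A
    (fun i hi m => by have := hr i m; rwa [alpha_neg_lt hi] at this)
    (fun i hi => by have := hrt i; rwa [alpha_neg_lt hi] at this) hz1
  have hcolaux := top_rows_aux hk Aᵀ
    (fun j hj m => by have := hc j m; rwa [alpha_neg_lt hj] at this)
    (fun j hj => by have := hct j; rwa [alpha_neg_lt hj] at this)
    (fun p q hp hq => hz2 q p hq hp)
  have hT : (-(topB hk A))ᵀ = -(topB hk Aᵀ) := by
    rw [topB_transpose, Matrix.transpose_neg]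
  rw [isASM_iff]
  refine ⟨?_, hrowaux.1, hrowaux.2, ?_, ?_⟩
  · intro i j
    have : (-(topB hk A)) i j = -(A (Fin.castLE hk i) (Fin.castLE hk j)) := rfl
    rw [this]
    rcases h0 (Fin.castLE hk i) (Fin.castLE hk j) with h|h|h <;> rw [h] <;> norm_num
  · intro j m; rw [hT]; exact hcolaux.1 j m
  · intro j; rw [hT]; exact hcolaux.2 j

lemma botASM {n k : ℕ} (hk : k ≤ n) (A : Matrix (Fin n) (Fin n) ℤ)
    (hA : IsGASM (alphaVec n k) (alphaVec n k) (alphaVec n k) (alphaVec n k) A) :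
    IsASM (botB hk A) := by
  obtain ⟨hz1, hz2⟩ := G_offdiag hk A hA
  rw [isGASM_iff _ _ (signVec_alpha n k) (signVec_alpha n k)] at hA
  obtain ⟨h0, hr, hrt, hc, hct⟩ := hA
  have hrowaux := bot_rows_aux hk A
    (fun i hi m => by have := hr i m; rwa [alpha_neg_ge hi] at this)
    (fun i hi => by have := hrt i; rwa [alpha_neg_ge hi] at this) hz2
  have hcolaux := bot_rows_aux hk Aᵀ
    (fun j hj m => by have := hc j m; rwa [alpha_neg_ge hj] at this)
    (fun j hj => by have := hct j; rwa [alpha_neg_ge hj] at this)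
    (fun p q hp hq => hz1 q p hq hp)
  have hT : (botB hk A)ᵀ = botB hk Aᵀ := (botB_transpose hk A).symm
  rw [isASM_iff]
  refine ⟨?_, hrowaux.1, hrowaux.2, ?_, ?_⟩
  · intro i j; exact h0 _ _
  · intro j m; rw [hT]; exact hcolaux.1 j m
  · intro j; rw [hT]; exact hcolaux.2 j

/-! ### block constructions are (G)ASMs -/

lemma RS_blockM_top' {n k : ℕ} (hk : k ≤ n) (B₁ : Matrix (Fin k) (Fin k) ℤ)
    (B₂ : Matrix (Fin (n - k)) (Fin (n - k)) ℤ) (i : Fin n) (hi : (i : ℕ) < k) (m : ℕ) :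
    RS (blockM hk B₁ B₂) i m = RS B₁ ⟨(i : ℕ), hi⟩ (min m k) := by
  have := RS_blockM_top hk B₁ B₂ ⟨(i : ℕ), hi⟩ m
  rwa [show Fin.castLE hk ⟨(i : ℕ), hi⟩ = i from Fin.ext rfl] at this

lemma RS_blockM_bot' {n k : ℕ} (hk : k ≤ n) (B₁ : Matrix (Fin k) (Fin k) ℤ)
    (B₂ : Matrix (Fin (n - k)) (Fin (n - k)) ℤ) (i : Fin n) (hi : k ≤ (i : ℕ)) (m : ℕ) :
    RS (blockM hk B₁ B₂) i m =
      RS B₂ ⟨(i : ℕ) - k, by have := i.isLt; omega⟩ (m - k) := by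
  have := RS_blockM_bot hk B₁ B₂ ⟨(i : ℕ) - k, by have := i.isLt; omega⟩ m
  rwa [show (⟨k + ((⟨(i : ℕ) - k, by have := i.isLt; omega⟩ : Fin (n - k)) : ℕ),
      by have := i.isLt; simp; omega⟩ : Fin n) = i from Fin.ext (by simp; omega)] at this

lemma blockM_entries {n k : ℕ} (hk : k ≤ n) {B₁ : Matrix (Fin k) (Fin k) ℤ}
    {B₂ : Matrix (Fin (n - k)) (Fin (n - k)) ℤ}
    (h1 : ∀ i j, B₁ i j = 0 ∨ B₁ i j = 1 ∨ B₁ i j = -1)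
    (h2 : ∀ i j, B₂ i j = 0 ∨ B₂ i j = 1 ∨ B₂ i j = -1) :
    ∀ i j, blockM hk B₁ B₂ i j = 0 ∨ blockM hk B₁ B₂ i j = 1 ∨
      blockM hk B₁ B₂ i j = -1 := by
  intro i j
  rw [blockM]
  by_cases hi : (i : ℕ) < k <;> by_cases hj : (j : ℕ) < k <;>
    simp only [hi, hj, dif_pos, dif_neg, not_false_iff, if_pos, if_neg]
  · exact h1 _ _
  · simp
  · simp
  · exact h2 _ _

lemma blockM_isGASM {n k : ℕ} (hk : k ≤ n) {A₁ : Matrix (Fin k) (Fin k) ℤ}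
    {A₂ : Matrix (Fin (n - k)) (Fin (n - k)) ℤ}
    (h1 : IsASM A₁) (h2 : IsASM A₂) :
    IsGASM (alphaVec n k) (alphaVec n k) (alphaVec n k) (alphaVec n k)
      (blockM hk (-A₁) A₂) := by
  rw [isASM_iff] at h1 h2
  obtain ⟨e1, r1, rt1, c1, ct1⟩ := h1
  obtain ⟨e2, r2, rt2, c2, ct2⟩ := h2
  have hT : (blockM hk (-A₁) A₂)ᵀ = blockM hk (-A₁ᵀ) A₂ᵀ := by
    rw [blockM_transpose, Matrix.transpose_neg]
  rw [isGASM_iff _ _ (signVec_alpha n k) (signVec_alpha n k)]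
  have hne1 : ∀ i j, (-A₁) i j = 0 ∨ (-A₁) i j = 1 ∨ (-A₁) i j = -1 := by
    intro i j
    have : (-A₁) i j = -(A₁ i j) := rfl
    rw [this]; rcases e1 i j with h|h|h <;> rw [h] <;> norm_num
  have hne1T : ∀ i j, (-A₁ᵀ) i j = 0 ∨ (-A₁ᵀ) i j = 1 ∨ (-A₁ᵀ) i j = -1 := by
    intro i j
    have : (-A₁ᵀ) i j = -(A₁ j i) := rfl
    rw [this]; rcases e1 j i with h|h|h <;> rw [h] <;> norm_num
  have hrows : ∀ (M : Matrix (Fin n) (Fin n) ℤ), M = blockM hk (-A₁) A₂ ∨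
      M = blockM hk (-A₁ᵀ) A₂ᵀ → True := fun _ _ => trivial
  refine ⟨blockM_entries hk hne1 (fun i j => e2 i j), ?_, ?_, ?_, ?_⟩
  · intro i m
    by_cases hi : (i : ℕ) < k
    · rw [RS_blockM_top' hk _ _ i hi m, RS_neg, alpha_neg_lt hi]
      rcases r1 ⟨(i : ℕ), hi⟩ (min m k) with h|h <;> omega
    · rw [RS_blockM_bot' hk _ _ i (le_of_not_gt hi) m, alpha_neg_ge (le_of_not_gt hi)]
      exact r2 _ _
  · intro i
    by_cases hi : (i : ℕ) < k
    · rw [RS_blockM_top' hk _ _ i hi n, RS_neg, alpha_neg_lt hi,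
        show min n k = k by omega]
      have := rt1 ⟨(i : ℕ), hi⟩; omega
    · rw [RS_blockM_bot' hk _ _ i (le_of_not_gt hi) n, alpha_neg_ge (le_of_not_gt hi)]
      exact rt2 _
  · intro j m
    rw [hT]
    by_cases hj : (j : ℕ) < k
    · rw [RS_blockM_top' hk _ _ j hj m, RS_neg, alpha_neg_lt hj]
      rcases c1 ⟨(j : ℕ), hj⟩ (min m k) with h|h <;> omega
    · rw [RS_blockM_bot' hk _ _ j (le_of_not_gt hj) m, alpha_neg_ge (le_of_not_gt hj)]
      exact c2 _ _
  · intro j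
    rw [hT]
    by_cases hj : (j : ℕ) < k
    · rw [RS_blockM_top' hk _ _ j hj n, RS_neg, alpha_neg_lt hj,
        show min n k = k by omega]
      have := ct1 ⟨(j : ℕ), hj⟩; omega
    · rw [RS_blockM_bot' hk _ _ j (le_of_not_gt hj) n, alpha_neg_ge (le_of_not_gt hj)]
      exact ct2 _

lemma blockM_isASM {n k : ℕ} (hk : k ≤ n) {A₁ : Matrix (Fin k) (Fin k) ℤ}
    {A₂ : Matrix (Fin (n - k)) (Fin (n - k)) ℤ}
    (h1 : IsASM A₁) (h2 : IsASM A₂) :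
    IsASM (blockM hk A₁ A₂) := by
  rw [isASM_iff] at h1 h2 ⊢
  obtain ⟨e1, r1, rt1, c1, ct1⟩ := h1
  obtain ⟨e2, r2, rt2, c2, ct2⟩ := h2
  have hT : (blockM hk A₁ A₂)ᵀ = blockM hk A₁ᵀ A₂ᵀ := blockM_transpose hk A₁ A₂
  refine ⟨blockM_entries hk e1 e2, ?_, ?_, ?_, ?_⟩
  · intro i m
    by_cases hi : (i : ℕ) < k
    · rw [RS_blockM_top' hk _ _ i hi m]; exact r1 _ _
    · rw [RS_blockM_bot' hk _ _ i (le_of_not_gt hi) m]; exact r2 _ _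
  · intro i
    by_cases hi : (i : ℕ) < k
    · rw [RS_blockM_top' hk _ _ i hi n, show min n k = k by omega]; exact rt1 _
    · rw [RS_blockM_bot' hk _ _ i (le_of_not_gt hi) n]; exact rt2 _
  · intro j m
    rw [hT]
    by_cases hj : (j : ℕ) < k
    · rw [RS_blockM_top' hk _ _ j hj m]; exact c1 _ _
    · rw [RS_blockM_bot' hk _ _ j (le_of_not_gt hj) m]; exact c2 _ _
  · intro j
    rw [hT]
    by_cases hj : (j : ℕ) < k
    · rw [RS_blockM_top' hk _ _ j hj n, show min n k = k by omega]; exact ct1 _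
    · rw [RS_blockM_bot' hk _ _ j (le_of_not_gt hj) n]; exact ct2 _

/-! ### block/extraction identities -/

lemma topB_blockM {n k : ℕ} (hk : k ≤ n) (B₁ : Matrix (Fin k) (Fin k) ℤ)
    (B₂ : Matrix (Fin (n - k)) (Fin (n - k)) ℤ) :
    topB hk (blockM hk B₁ B₂) = B₁ := by
  ext i j
  show blockM hk B₁ B₂ (Fin.castLE hk i) (Fin.castLE hk j) = B₁ i j
  rw [blockM, dif_pos (show ((Fin.castLE hk i : Fin n) : ℕ) < k from i.isLt),
    dif_pos (show ((Fin.castLE hk j : Fin n) : ℕ) < k from j.isLt)]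
  congr 1 <;> exact Fin.ext rfl

lemma botB_blockM {n k : ℕ} (hk : k ≤ n) (B₁ : Matrix (Fin k) (Fin k) ℤ)
    (B₂ : Matrix (Fin (n - k)) (Fin (n - k)) ℤ) :
    botB hk (blockM hk B₁ B₂) = B₂ := by
  ext i j
  show blockM hk B₁ B₂ ⟨k + i, by have := i.isLt; omega⟩
    ⟨k + j, by have := j.isLt; omega⟩ = B₂ i j
  rw [blockM, dif_neg (by simp), if_neg (by simp)]
  congr 1 <;> exact Fin.ext (by simp)

lemma blockM_topB_botB {n k : ℕ} (hk : k ≤ n) (A : Matrix (Fin n) (Fin n) ℤ)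
    (hz1 : ∀ i j : Fin n, (i : ℕ) < k → k ≤ (j : ℕ) → A i j = 0)
    (hz2 : ∀ i j : Fin n, k ≤ (i : ℕ) → (j : ℕ) < k → A i j = 0) :
    blockM hk (topB hk A) (botB hk A) = A := by
  ext i j
  rw [blockM]
  by_cases hi : (i : ℕ) < k
  · rw [dif_pos hi]
    by_cases hj : (j : ℕ) < k
    · rw [dif_pos hj]
      show A (Fin.castLE hk ⟨(i : ℕ), hi⟩) (Fin.castLE hk ⟨(j : ℕ), hj⟩) = A i j
      congr 1 <;> exact Fin.ext rfl
    · rw [dif_neg hj]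
      exact (hz1 i j hi (le_of_not_gt hj)).symm
  · rw [dif_neg hi]
    by_cases hj : (j : ℕ) < k
    · rw [if_pos hj]
      exact (hz2 i j (le_of_not_gt hi) hj).symm
    · rw [if_neg hj]
      show A ⟨k + ((i : ℕ) - k), by have := i.isLt; omega⟩
        ⟨k + ((j : ℕ) - k), by have := j.isLt; omega⟩ = A i j
      congr 1 <;> exact Fin.ext (by simp; omega)

/-! ### finiteness -/

lemma finite_entrySet (n : ℕ) :
    {A : Matrix (Fin n) (Fin n) ℤ |
      ∀ i j, A i j = 0 ∨ A i j = 1 ∨ A i j = -1}.Finite := by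
  have h1 : ({0, 1, -1} : Set ℤ).Finite := Set.toFinite _
  have h2 : (Set.univ.pi fun _ : Fin n => ({0, 1, -1} : Set ℤ)).Finite :=
    Set.Finite.pi (fun _ => h1)
  have h3 : (Set.univ.pi fun _ : Fin n =>
      (Set.univ.pi fun _ : Fin n => ({0, 1, -1} : Set ℤ))).Finite :=
    Set.Finite.pi (fun _ => h2)
  refine h3.subset ?_
  intro A hA
  simp only [Set.mem_pi, Set.mem_univ, forall_true_left]
  intro i j
  rcases hA i j with h|h|h <;> simp [h]

lemma finite_ASM (n : ℕ) : {A : Matrix (Fin n) (Fin n) ℤ | IsASM A}.Finite := by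
  refine (finite_entrySet n).subset ?_
  intro A hA
  exact hA.1

lemma finite_G (n k : ℕ) :
    {A : Matrix (Fin n) (Fin n) ℤ |
      IsGASM (alphaVec n k) (alphaVec n k) (alphaVec n k) (alphaVec n k) A}.Finite := by
  refine (finite_entrySet n).subset ?_
  intro A hA
  exact hA.1


theorem stmt13 {n k : ℕ} (hk : k ≤ n) :
    Set.ncard {A : Matrix (Fin n) (Fin n) ℤ |
        IsGASM (alphaVec n k) (alphaVec n k) (alphaVec n k) (alphaVec n k) A} =
      numASM k * numASM (n - k) ∧
    numASM k * numASM (n - k) ≤ numASM n := by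
  set G := {A : Matrix (Fin n) (Fin n) ℤ |
    IsGASM (alphaVec n k) (alphaVec n k) (alphaVec n k) (alphaVec n k) A} with hG
  set S1 := {A : Matrix (Fin k) (Fin k) ℤ | IsASM A} with hS1
  set S2 := {A : Matrix (Fin (n - k)) (Fin (n - k)) ℤ | IsASM A} with hS2
  set SN := {A : Matrix (Fin n) (Fin n) ℤ | IsASM A} with hSN
  have hprod : (S1 ×ˢ S2).ncard = S1.ncard * S2.ncard := by
    rw [← Nat.card_coe_set_eq, ← Nat.card_coe_set_eq,
      ← Nat.card_coe_set_eq, Nat.card_congr (Equiv.Set.prod S1 S2), Nat.card_prod]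
  have hnum : numASM k * numASM (n - k) = (S1 ×ˢ S2).ncard := by
    rw [hprod]; rfl
  -- bijection for the equality
  set f : Matrix (Fin n) (Fin n) ℤ →
      Matrix (Fin k) (Fin k) ℤ × Matrix (Fin (n - k)) (Fin (n - k)) ℤ :=
    fun A => (-(topB hk A), botB hk A) with hf
  have hbij : Set.BijOn f G (S1 ×ˢ S2) := by
    refine ⟨?_, ?_, ?_⟩
    · intro A hA
      exact Set.mem_prod.2 ⟨topASM hk A hA, botASM hk A hA⟩
    · intro A hA B hB hAB
      have h1 : -(topB hk A) = -(topB hk B) := congrArg Prod.fst hAB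
      have h1' : topB hk A = topB hk B := by
        have := congrArg (fun M => -M) h1
        simpa using this
      have h2 : botB hk A = botB hk B := congrArg Prod.snd hAB
      obtain ⟨za1, za2⟩ := G_offdiag hk A hA
      obtain ⟨zb1, zb2⟩ := G_offdiag hk B hB
      calc A = blockM hk (topB hk A) (botB hk A) := (blockM_topB_botB hk A za1 za2).symm
        _ = blockM hk (topB hk B) (botB hk B) := by rw [h1', h2]
        _ = B := blockM_topB_botB hk B zb1 zb2
    · rintro ⟨A₁, A₂⟩ hmem
      obtain ⟨h1, h2⟩ := Set.mem_prod.1 hmem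
      refine ⟨blockM hk (-A₁) A₂, blockM_isGASM hk h1 h2, ?_⟩
      simp only [hf, topB_blockM, botB_blockM, neg_neg]
  have heq : G.ncard = (S1 ×ˢ S2).ncard := by
    rw [← hbij.image_eq, Set.ncard_image_of_injOn hbij.injOn]
  -- injection for the inequality
  set g : Matrix (Fin k) (Fin k) ℤ × Matrix (Fin (n - k)) (Fin (n - k)) ℤ →
      Matrix (Fin n) (Fin n) ℤ := fun p => blockM hk p.1 p.2 with hg
  have hginj : Set.InjOn g (S1 ×ˢ S2) := by
    intro p _ q _ hpq
    have h1 : p.1 = q.1 := by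
      have := congrArg (topB hk) hpq
      simpa only [hg, topB_blockM] using this
    have h2 : p.2 = q.2 := by
      have := congrArg (botB hk) hpq
      simpa only [hg, botB_blockM] using this
    exact Prod.ext h1 h2
  have hgsub : g '' (S1 ×ˢ S2) ⊆ SN := by
    rintro _ ⟨⟨A₁, A₂⟩, hmem, rfl⟩
    obtain ⟨h1, h2⟩ := Set.mem_prod.1 hmem
    exact blockM_isASM hk h1 h2
  have hineq : (S1 ×ˢ S2).ncard ≤ SN.ncard := by
    rw [← Set.ncard_image_of_injOn hginj]
    exact Set.ncard_le_ncard hgsub (finite_ASM n)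
  constructor
  · rw [hnum]; exact heq
  · rw [hnum]; exact hineq
end
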